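/- For any triangle xyz in the plane and α = 2π/3, the three α-lenses α(x,y), α(y,z), α(x,z) have a common point. Equivalently, either some angle of the triangle is at least 2π/3, or there exists a point p inside the triangle with ∠xpy = ∠ypz = ∠zpx = 2π/3. -/

import Mathlib

open Real EuclideanGeometry

/-- The `α`-lens of the pair `a b`: points (including the endpoints themselves)
from which the segment `ab` subtends an angle at least `α`. -/
def lens (α : ℝ) (a b : EuclideanSpace ℝ (Fin 2)) : Set (EuclideanSpace ℝ (Fin 2)) :=
  {p | p = a ∨ p = b ∨ α ≤ ∠ a p b}

open RealInnerProductSpace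

lemma quad_bound {E : Type*} [NormedAddCommGroup E] [InnerProductSpace ℝ E]
    {c : E} (hc : c ≠ 0) (v : E) (t : ℝ) :
    ‖c + t • v‖ ≤ ‖c‖ + t * (⟪v, c⟫ / ‖c‖) + t ^ 2 * (‖v‖ ^ 2 / (2 * ‖c‖)) := by
  have hr : 0 < ‖c‖ := norm_pos_iff.mpr hc
  have expand : ‖c + t • v‖ ^ 2 = ‖c‖^2 + 2 * (t * ⟪v, c⟫) + t^2 * ‖v‖^2 := by
    rw [norm_add_sq_real, real_inner_smul_right, norm_smul, real_inner_comm,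
      Real.norm_eq_abs, mul_pow, sq_abs]
  rw [show ‖c‖ + t * (⟪v, c⟫ / ‖c‖) + t ^ 2 * (‖v‖ ^ 2 / (2 * ‖c‖))
        = (2*‖c‖^2 + 2*(t*⟪v, c⟫) + t^2*‖v‖^2)/(2*‖c‖) by field_simp,
    le_div_iff₀ (by positivity)]
  nlinarith [sq_nonneg (‖c + t • v‖ - ‖c‖), expand]

lemma deriv_nonneg_of_min {a K t0 : ℝ} (ht0 : 0 < t0)
    (H : ∀ t, 0 < t → t ≤ t0 → 0 ≤ a * t + K * t ^ 2) : 0 ≤ a := by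
  by_contra hneg
  push_neg at hneg
  rcases le_or_gt K 0 with hK | hK
  · have := H t0 ht0 le_rfl
    nlinarith
  · set t := min t0 (-a / (2 * K)) with htdef
    have htpos : 0 < t := lt_min ht0 (by apply div_pos (by linarith) (by linarith))
    have h2 : t ≤ -a / (2 * K) := min_le_right _ _
    have := H t htpos (min_le_left _ _)
    have h3 : K * t ≤ -a / 2 := by
      have h2' : t * (2 * K) ≤ -a := (le_div_iff₀ (by linarith)).mp h2
      linarith
    nlinarith

lemma inner_unit {E : Type*} [NormedAddCommGroup E] [InnerProductSpace ℝ E] (a b : E) :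
    ⟪‖a‖⁻¹ • a, ‖b‖⁻¹ • b⟫ = ⟪a, b⟫ / (‖a‖ * ‖b‖) := by
  rw [real_inner_smul_left, real_inner_smul_right, div_eq_mul_inv, mul_inv]; ring

lemma not_min_at_vertex {E : Type*} [NormedAddCommGroup E] [InnerProductSpace ℝ E]
    {x y z : E} (hxy : x ≠ y) (hxz : x ≠ z)
    (hA : -(1/2) < ⟪y - x, z - x⟫ / (‖y - x‖ * ‖z - x‖))
    (hmin : ∀ q, dist x y + dist x z ≤ dist q x + dist q y + dist q z) : False := by
  have hyx : y - x ≠ 0 := sub_ne_zero.mpr hxy.symm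
  have hzx : z - x ≠ 0 := sub_ne_zero.mpr hxz.symm
  have hry : 0 < ‖y - x‖ := norm_pos_iff.mpr hyx
  have hrz : 0 < ‖z - x‖ := norm_pos_iff.mpr hzx
  set u : E := ‖y - x‖⁻¹ • (y - x) with hu
  set w : E := ‖z - x‖⁻¹ • (z - x) with hw
  have hnu : ‖u‖ = 1 := by rw [hu, norm_smul, norm_inv, norm_norm, inv_mul_cancel₀ hry.ne']
  have hnw : ‖w‖ = 1 := by rw [hw, norm_smul, norm_inv, norm_norm, inv_mul_cancel₀ hrz.ne']
  have hc2 : ⟪u, w⟫ = ⟪y - x, z - x⟫ / (‖y - x‖ * ‖z - x‖) := inner_unit _ _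
  set v : E := u + w with hv
  have hc2' : -(1/2) < ⟪u, w⟫ := by rw [hc2]; exact hA
  have huu : ⟪u, u⟫ = 1 := by rw [real_inner_self_eq_norm_sq, hnu]; norm_num
  have hww : ⟪w, w⟫ = 1 := by rw [real_inner_self_eq_norm_sq, hnw]; norm_num
  have hvsq : ‖v‖ ^ 2 = 2 + 2 * ⟪u, w⟫ := by
    rw [hv, norm_add_sq_real, hnu, hnw]; ring
  have hv1 : 1 < ‖v‖ := by nlinarith [norm_nonneg v]
  have hkey : ‖v‖ < 2 + 2 * ⟪u, w⟫ := by nlinarith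
  have hvu : ⟪v, u⟫ = 1 + ⟪u, w⟫ := by
    rw [hv, inner_add_left, huu, real_inner_comm w u]
  have hvw : ⟪v, w⟫ = 1 + ⟪u, w⟫ := by
    rw [hv, inner_add_left, hww]; ring
  have hyx' : y - x = ‖y - x‖ • u := by
    rw [hu, smul_smul, mul_inv_cancel₀ hry.ne', one_smul]
  have hzx' : z - x = ‖z - x‖ • w := by
    rw [hw, smul_smul, mul_inv_cancel₀ hrz.ne', one_smul]
  have ha : (0:ℝ) ≤ ‖v‖ - 2 * (1 + ⟪u, w⟫) := by
    apply deriv_nonneg_of_min (t0 := 1)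
      (K := ‖v‖ ^ 2 / (2 * ‖x - y‖) + ‖v‖ ^ 2 / (2 * ‖x - z‖)) one_pos
    intro t ht _
    have hq := hmin (x + t • v)
    have d1 : dist (x + t • v) x = t * ‖v‖ := by
      rw [dist_eq_norm]
      simp [norm_smul, abs_of_pos ht]
    have d2 : dist (x + t • v) y ≤ ‖x - y‖ + t * (⟪v, x - y⟫ / ‖x - y‖)
        + t ^ 2 * (‖v‖ ^ 2 / (2 * ‖x - y‖)) := by
      rw [dist_eq_norm, show x + t • v - y = (x - y) + t • v by abel]
      exact quad_bound (sub_ne_zero.mpr hxy) v t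
    have d3 : dist (x + t • v) z ≤ ‖x - z‖ + t * (⟪v, x - z⟫ / ‖x - z‖)
        + t ^ 2 * (‖v‖ ^ 2 / (2 * ‖x - z‖)) := by
      rw [dist_eq_norm, show x + t • v - z = (x - z) + t • v by abel]
      exact quad_bound (sub_ne_zero.mpr hxz) v t
    have n2 : ⟪v, x - y⟫ = -(‖y - x‖ * (1 + ⟪u, w⟫)) := by
      rw [show x - y = -(y - x) by abel, inner_neg_right, hyx', real_inner_smul_right, hvu, norm_smul, norm_norm, hnu, mul_one]
    have n3 : ⟪v, x - z⟫ = -(‖z - x‖ * (1 + ⟪u, w⟫)) := by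
      rw [show x - z = -(z - x) by abel, inner_neg_right, hzx', real_inner_smul_right, hvw, norm_smul, norm_norm, hnw, mul_one]
    have e2 : ⟪v, x - y⟫ / ‖x - y‖ = -(1 + ⟪u, w⟫) := by
      rw [n2, norm_sub_rev x y]; field_simp
    have e3 : ⟪v, x - z⟫ / ‖x - z‖ = -(1 + ⟪u, w⟫) := by
      rw [n3, norm_sub_rev x z]; field_simp
    rw [e2] at d2
    rw [e3] at d3
    rw [d1, dist_eq_norm x y, dist_eq_norm x z] at hq
    nlinarith [d2, d3, hq]
  linarith

lemma unit_triple_inner {E : Type*} [NormedAddCommGroup E] [InnerProductSpace ℝ E]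
    {a b c : E} (ha : ‖a‖ = 1) (hb : ‖b‖ = 1) (hc : ‖c‖ = 1)
    (habc : a + b + c = 0) : ⟪a, b⟫ = -(1/2) := by
  have h1 : a + b = -c := by
    have : a + b + c - c = 0 - c := by rw [habc]
    simpa using this
  have h2 : ‖a + b‖ ^ 2 = 1 := by rw [h1, norm_neg, hc]; norm_num
  rw [norm_add_sq_real, ha, hb] at h2
  linarith

lemma fermat_inner {E : Type*} [NormedAddCommGroup E] [InnerProductSpace ℝ E]
    {p x y z : E} (hpx : p ≠ x) (hpy : p ≠ y) (hpz : p ≠ z)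
    (hmin : ∀ q, dist p x + dist p y + dist p z ≤ dist q x + dist q y + dist q z) :
    ⟪x - p, y - p⟫ / (‖x - p‖ * ‖y - p‖) = -(1/2) ∧
    ⟪y - p, z - p⟫ / (‖y - p‖ * ‖z - p‖) = -(1/2) ∧
    ⟪x - p, z - p⟫ / (‖x - p‖ * ‖z - p‖) = -(1/2) := by
  have h1 : p - x ≠ 0 := sub_ne_zero.mpr hpx
  have h2 : p - y ≠ 0 := sub_ne_zero.mpr hpy
  have h3 : p - z ≠ 0 := sub_ne_zero.mpr hpz
  have r1 : 0 < ‖p - x‖ := norm_pos_iff.mpr h1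
  have r2 : 0 < ‖p - y‖ := norm_pos_iff.mpr h2
  have r3 : 0 < ‖p - z‖ := norm_pos_iff.mpr h3
  set u1 : E := ‖p - x‖⁻¹ • (p - x) with hu1
  set u2 : E := ‖p - y‖⁻¹ • (p - y) with hu2
  set u3 : E := ‖p - z‖⁻¹ • (p - z) with hu3
  have n1 : ‖u1‖ = 1 := by rw [hu1, norm_smul, norm_inv, norm_norm, inv_mul_cancel₀ r1.ne']
  have n2 : ‖u2‖ = 1 := by rw [hu2, norm_smul, norm_inv, norm_norm, inv_mul_cancel₀ r2.ne']
  have n3 : ‖u3‖ = 1 := by rw [hu3, norm_smul, norm_inv, norm_norm, inv_mul_cancel₀ r3.ne']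
  have hS : ∀ v : E, (0:ℝ) ≤ ⟪v, u1 + u2 + u3⟫ := by
    intro v
    have := deriv_nonneg_of_min (a := ⟪v, u1 + u2 + u3⟫)
      (K := ‖v‖^2/(2*‖p - x‖) + ‖v‖^2/(2*‖p - y‖) + ‖v‖^2/(2*‖p - z‖)) (t0 := 1) one_pos ?_
    · exact this
    intro t ht _
    have hq := hmin (p + t • v)
    have e1 : ⟪v, p - x⟫ / ‖p - x‖ = ⟪v, u1⟫ := by
      rw [hu1, real_inner_smul_right, div_eq_inv_mul]
    have e2 : ⟪v, p - y⟫ / ‖p - y‖ = ⟪v, u2⟫ := by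
      rw [hu2, real_inner_smul_right, div_eq_inv_mul]
    have e3 : ⟪v, p - z⟫ / ‖p - z‖ = ⟪v, u3⟫ := by
      rw [hu3, real_inner_smul_right, div_eq_inv_mul]
    have d1 : dist (p + t • v) x ≤ ‖p - x‖ + t * ⟪v, u1⟫ + t ^ 2 * (‖v‖ ^ 2 / (2 * ‖p - x‖)) := by
      rw [dist_eq_norm, show p + t • v - x = (p - x) + t • v by abel, ← e1]
      exact quad_bound h1 v t
    have d2 : dist (p + t • v) y ≤ ‖p - y‖ + t * ⟪v, u2⟫ + t ^ 2 * (‖v‖ ^ 2 / (2 * ‖p - y‖)) := by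
      rw [dist_eq_norm, show p + t • v - y = (p - y) + t • v by abel, ← e2]
      exact quad_bound h2 v t
    have d3 : dist (p + t • v) z ≤ ‖p - z‖ + t * ⟪v, u3⟫ + t ^ 2 * (‖v‖ ^ 2 / (2 * ‖p - z‖)) := by
      rw [dist_eq_norm, show p + t • v - z = (p - z) + t • v by abel, ← e3]
      exact quad_bound h3 v t
    have hsum : ⟪v, u1 + u2 + u3⟫ = ⟪v, u1⟫ + ⟪v, u2⟫ + ⟪v, u3⟫ := by
      rw [inner_add_right, inner_add_right]
    rw [dist_eq_norm p x, dist_eq_norm p y, dist_eq_norm p z] at hq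
    rw [hsum]
    nlinarith [d1, d2, d3, hq]
  have hS0 : u1 + u2 + u3 = 0 := by
    have hneg := hS (-(u1 + u2 + u3))
    rw [inner_neg_left] at hneg
    have : ⟪u1 + u2 + u3, u1 + u2 + u3⟫ ≤ 0 := by linarith
    exact real_inner_self_nonpos.mp this
  have p12 : ⟪u1, u2⟫ = -(1/2) := unit_triple_inner n1 n2 n3 hS0
  have p23 : ⟪u2, u3⟫ = -(1/2) := unit_triple_inner n2 n3 n1 (by rw [← hS0]; abel)
  have p13 : ⟪u1, u3⟫ = -(1/2) := by
    have := unit_triple_inner n3 n1 n2 (by rw [← hS0]; abel)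
    rw [real_inner_comm] at this
    exact this
  have conv : ∀ a b : E, ⟪p - a, p - b⟫ / (‖p - a‖ * ‖p - b‖)
      = ⟪a - p, b - p⟫ / (‖a - p‖ * ‖b - p‖) := by
    intro a b
    rw [show a - p = -(p - a) by abel, show b - p = -(p - b) by abel,
      inner_neg_neg, norm_neg, norm_neg]
  refine ⟨?_, ?_, ?_⟩
  · rw [← conv, ← inner_unit, ← hu1, ← hu2]; exact p12
  · rw [← conv, ← inner_unit, ← hu2, ← hu3]; exact p23
  · rw [← conv, ← inner_unit, ← hu1, ← hu3]; exact p13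

lemma arccos_neg_half : Real.arccos (-(1/2)) = 2 * π / 3 := by
  rw [Real.arccos_neg]
  have : Real.arccos (1/2) = π/3 := by
    rw [show (1:ℝ)/2 = Real.cos (π/3) by rw [Real.cos_pi_div_three],
      Real.arccos_cos (by positivity) (by linarith [Real.pi_pos])]
  rw [this]; ring

lemma cos_two_pi_div_three' : Real.cos (2 * π / 3) = -(1/2) := by
  rw [show 2*π/3 = π - π/3 by ring, Real.cos_pi_sub, Real.cos_pi_div_three]

lemma angle_eq_arccos' (a p b : EuclideanSpace ℝ (Fin 2)) :
    ∠ a p b = Real.arccos (⟪a - p, b - p⟫ / (‖a - p‖ * ‖b - p‖)) := by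
  rw [EuclideanGeometry.angle, vsub_eq_sub, vsub_eq_sub, InnerProductGeometry.angle]

lemma cos_bound {a p b : EuclideanSpace ℝ (Fin 2)} (hlt : ∠ a p b < 2 * π / 3) :
    -(1/2) < ⟪a - p, b - p⟫ / (‖a - p‖ * ‖b - p‖) := by
  have h1 : Real.cos (2 * π / 3) < Real.cos (∠ a p b) :=
    Real.cos_lt_cos_of_nonneg_of_le_pi (EuclideanGeometry.angle_nonneg a p b)
      (by linarith [Real.pi_pos]) hlt
  rw [cos_two_pi_div_three'] at h1
  rw [angle_eq_arccos'] at h1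
  have hv := abs_real_inner_div_norm_mul_norm_le_one (a - p) (b - p)
  rwa [Real.cos_arccos (neg_le_of_abs_le hv) (le_of_abs_le hv)] at h1

theorem lenses_two_pi_div_three_of_triangle_intersect
    (x y z : EuclideanSpace ℝ (Fin 2)) (h : AffineIndependent ℝ ![x, y, z]) :
    ∃ p, p ∈ lens (2 * π / 3) x y ∧ p ∈ lens (2 * π / 3) y z ∧
      p ∈ lens (2 * π / 3) x z := by
  have hxy : x ≠ y := by
    intro e
    exact (by decide : (0:Fin 3) ≠ 1) (h.injective (show ![x,y,z] 0 = ![x,y,z] 1 by simpa using e))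
  have hyz : y ≠ z := by
    intro e
    exact (by decide : (1:Fin 3) ≠ 2) (h.injective (show ![x,y,z] 1 = ![x,y,z] 2 by simpa using e))
  have hxz : x ≠ z := by
    intro e
    exact (by decide : (0:Fin 3) ≠ 2) (h.injective (show ![x,y,z] 0 = ![x,y,z] 2 by simpa using e))
  by_cases hA : 2 * π / 3 ≤ ∠ y x z
  · exact ⟨x, Or.inl rfl, Or.inr (Or.inr hA), Or.inl rfl⟩
  by_cases hB : 2 * π / 3 ≤ ∠ x y z
  · exact ⟨y, Or.inr (Or.inl rfl), Or.inl rfl, Or.inr (Or.inr hB)⟩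
  by_cases hC : 2 * π / 3 ≤ ∠ x z y
  · exact ⟨z, Or.inr (Or.inr hC), Or.inr (Or.inl rfl), Or.inr (Or.inl rfl)⟩
  push_neg at hA hB hC
  -- minimizer of the total distance
  set F : EuclideanSpace ℝ (Fin 2) → ℝ := fun q => dist q x + dist q y + dist q z with hF
  have hFcont : Continuous F := by
    rw [hF]; fun_prop
  obtain ⟨p, hpball, hp⟩ := (isCompact_closedBall x (F x + 1)).exists_isMinOn
    ⟨x, by simp only [Metric.mem_closedBall, dist_self]; positivity⟩
    hFcont.continuousOn
  have hxball : x ∈ Metric.closedBall x (F x + 1) := by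
    simp only [Metric.mem_closedBall, dist_self]; positivity
  have hmin : ∀ q, F p ≤ F q := by
    intro q
    by_cases hq : q ∈ Metric.closedBall x (F x + 1)
    · exact isMinOn_iff.mp hp q hq
    · have h1 : F p ≤ F x := isMinOn_iff.mp hp x hxball
      have h2 : F x + 1 < dist q x := by
        simpa [Metric.mem_closedBall] using hq
      have h3 : dist q x ≤ F q := by
        rw [hF]; dsimp only; linarith [dist_nonneg (x := q) (y := y), dist_nonneg (x := q) (y := z)]
      linarith
  have hFp : ∀ q, dist p x + dist p y + dist p z ≤ dist q x + dist q y + dist q z := by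
    intro q; simpa [hF] using hmin q
  have hpx : p ≠ x := by
    rintro rfl
    refine not_min_at_vertex hxy hxz (cos_bound hA) (fun q => ?_)
    have := hFp q; simp only [dist_self] at this; linarith
  have hpy : p ≠ y := by
    rintro rfl
    refine not_min_at_vertex hxy.symm hyz (cos_bound hB) (fun q => ?_)
    have := hFp q; simp only [dist_self] at this; linarith
  have hpz : p ≠ z := by
    rintro rfl
    refine not_min_at_vertex hxz.symm hyz.symm (cos_bound hC) (fun q => ?_)
    have := hFp q; simp only [dist_self] at this; linarith
  obtain ⟨q12, q23, q13⟩ := fermat_inner hpx hpy hpz hFp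
  have a12 : ∠ x p y = 2*π/3 := by rw [angle_eq_arccos', q12, arccos_neg_half]
  have a23 : ∠ y p z = 2*π/3 := by rw [angle_eq_arccos', q23, arccos_neg_half]
  have a13 : ∠ x p z = 2*π/3 := by rw [angle_eq_arccos', q13, arccos_neg_half]
  exact ⟨p, Or.inr (Or.inr a12.ge), Or.inr (Or.inr a23.ge), Or.inr (Or.inr a13.ge)⟩
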